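/- If 𝒞 is an 𝔽-linear monoidal category, then 𝒞_⊕ equipped with the tensor product ⊗_{𝒞_⊕}, the unit object 𝓘(𝟙) (the singleton family at the unit of 𝒞) with componentwise left and right unitors, and the associativity constraints whose set map reassociates ((s,t),r) ↦ (s,(t,r)) and whose components are the associators a_{X_s,Y_t,Z_r} of 𝒞, is a monoidal category: the associators and unitors are natural isomorphisms and the pentagon and triangle axioms hold. -/

import Mathlib

open CategoryTheory Limits
open scoped Classical

noncomputable section

universe u v

/-- An object of the direct sum completion: a formal direct sum `⊕_{s ∈ ι} X s`. -/
structure DSObj (C : Type u) [Category.{v} C] where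
  ι : Type
  X : ι → C

variable {C : Type u} [Category.{v} C] [Preadditive C]

/-- A pre-morphism `(α, {f_{s,t}})` between formal direct sums. -/
structure PreHom (A B : DSObj C) where
  α : Finset A.ι → Finset B.ι
  hα : ∀ P Q : Finset A.ι, α (P ∪ Q) = α P ∪ α Q
  f : ∀ (s : A.ι) (t : B.ι), t ∈ α {s} → (A.X s ⟶ B.X t)

namespace PreHom

/-- The equivalence relation `∼` on pre-morphisms. -/
def equiv {A B : DSObj C} (F G : PreHom A B) : Prop :=
  ∀ (s : A.ι) (t : B.ι),
    (∀ (h1 : t ∈ F.α {s}) (h2 : t ∈ G.α {s}), F.f s t h1 = G.f s t h2) ∧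
    (∀ h1 : t ∈ F.α {s}, t ∉ G.α {s} → F.f s t h1 = 0) ∧
    (∀ h2 : t ∈ G.α {s}, t ∉ F.α {s} → G.f s t h2 = 0)

/-- Composition of pre-morphisms (diagrammatic order: `F` then `G`). -/
def comp {A B D : DSObj C} (F : PreHom A B) (G : PreHom B D) : PreHom A D where
  α := fun P => G.α (F.α P)
  hα := fun P Q => by
    show G.α (F.α (P ∪ Q)) = G.α (F.α P) ∪ G.α (F.α Q)
    rw [F.hα, G.hα]
  f := fun s r _ => ∑ t ∈ (F.α {s}).attach,
    if h : r ∈ G.α {t.1} then F.f s t.1 t.2 ≫ G.f t.1 r h else 0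

/-- The identity pre-morphism. -/
def id (A : DSObj C) : PreHom A A where
  α := fun P => P
  hα := fun _ _ => rfl
  f := fun s t ht => eqToHom (by rw [Finset.mem_singleton.mp ht])

/-- The zero pre-morphism `(Ω, ∅)`. -/
def zero (A B : DSObj C) : PreHom A B where
  α := fun _ => ∅
  hα := fun _ _ => by simp
  f := fun _ t ht => absurd ht (Finset.notMem_empty t)

/-- Addition of pre-morphisms. -/
def add {A B : DSObj C} (F G : PreHom A B) : PreHom A B where
  α := fun P => F.α P ∪ G.α P
  hα := fun P Q => by
    show F.α (P ∪ Q) ∪ G.α (P ∪ Q) = (F.α P ∪ G.α P) ∪ (F.α Q ∪ G.α Q)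
    rw [F.hα, G.hα]; ext x; simp only [Finset.mem_union]; tauto
  f := fun s t _ =>
    (if h : t ∈ F.α {s} then F.f s t h else 0) + (if h : t ∈ G.α {s} then G.f s t h else 0)

/-- Negation of a pre-morphism: `(α, {-f_{s,t}})`. -/
def neg {A B : DSObj C} (F : PreHom A B) : PreHom A B where
  α := F.α
  hα := F.hα
  f := fun s t ht => -(F.f s t ht)

end PreHom

/-- Scalar multiplication of pre-morphisms, for a linear category. -/
def PreHom.smul {𝔽 : Type*} [Field 𝔽] [Linear 𝔽 C] {A B : DSObj C}
    (c : 𝔽) (F : PreHom A B) : PreHom A B where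
  α := F.α
  hα := F.hα
  f := fun s t ht => c • F.f s t ht

end
noncomputable section
open MonoidalCategory

variable {C : Type u} [Category.{v} C] [Preadditive C] [MonoidalCategory C]

private lemma mem_image_singleton {γ δ : Type} [DecidableEq δ] {g : γ → δ} {p : γ}
    {q : δ} (hq : q ∈ ({p} : Finset γ).image g) : g p = q := by
  rcases Finset.mem_image.mp hq with ⟨a, ha, h⟩
  rwa [Finset.mem_singleton.mp ha] at h

/-- The inclusion functor on objects: `X ↦ ⊕_{0∈{0}} X`. -/
def DSObj.incl (X : C) : DSObj C := ⟨PUnit, fun _ => X⟩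

/-- The inclusion functor on morphisms: `f ↦ (Id_{{0}}, {f})`. -/
def PreHom.incl {X Y : C} (f : X ⟶ Y) : PreHom (DSObj.incl X) (DSObj.incl Y) where
  α := fun P => P
  hα := fun _ _ => rfl
  f := fun _ _ _ => f

/-- The tensor product of objects of `𝒞_⊕`:
`(⊕_{s∈S} X_s) ⊗ (⊕_{t∈T} Y_t) = ⊕_{(s,t)∈S×T} (X_s ⊗ Y_t)`. -/
def DSObj.tensor (A B : DSObj C) : DSObj C :=
  ⟨A.ι × B.ι, fun p => A.X p.1 ⊗ B.X p.2⟩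

/-- The tensor product of pre-morphisms, with set map
`(α ⊗ β)({(sᵢ,tᵢ)}ᵢ) = ∪ᵢ α(sᵢ) × β(tᵢ)` and component maps `f_{s,s̃} ⊗ g_{t,t̃}`. -/
def PreHom.tensor {A A' B B' : DSObj C} (F : PreHom A B) (G : PreHom A' B') :
    PreHom (A.tensor A') (B.tensor B') where
  α := fun P => P.biUnion (fun p => F.α {p.1} ×ˢ G.α {p.2})
  hα := fun P Q => by
    exact Finset.union_biUnion
  f := fun p q hq => by
    have hq' : q ∈ F.α {p.1} ×ˢ G.α {p.2} := by
      obtain ⟨a, ha, h⟩ := Finset.mem_biUnion.mp hq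
      rwa [Finset.mem_singleton.mp ha] at h
    have hq'' := Finset.mem_product.mp hq'
    exact F.f p.1 q.1 hq''.1 ⊗ₘ G.f p.2 q.2 hq''.2

/-- The unit object of `𝒞_⊕`: the singleton family at the unit of `𝒞`. -/
def DSObj.unit (C : Type u) [Category.{v} C] [Preadditive C] [MonoidalCategory C] :
    DSObj C :=
  ⟨PUnit, fun _ => 𝟙_ C⟩

/-- The associativity constraint of `𝒞_⊕`, with set map `((s,t),r) ↦ (s,(t,r))`
and components the associators of `𝒞`. -/
def DSObj.assocHom (A B D : DSObj C) :
    PreHom ((A.tensor B).tensor D) (A.tensor (B.tensor D)) where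
  α := fun P => P.image (fun p => (p.1.1, (p.1.2, p.2)))
  hα := fun P Q => Finset.image_union P Q
  f := fun p q hq => by
    have h := mem_image_singleton hq
    subst h
    exact (α_ (A.X p.1.1) (B.X p.1.2) (D.X p.2)).hom

/-- The inverse associativity constraint of `𝒞_⊕`. -/
def DSObj.assocInvHom (A B D : DSObj C) :
    PreHom (A.tensor (B.tensor D)) ((A.tensor B).tensor D) where
  α := fun P => P.image (fun p => ((p.1, p.2.1), p.2.2))
  hα := fun P Q => Finset.image_union P Q
  f := fun p q hq => by
    have h := mem_image_singleton hq
    subst h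
    exact (α_ (A.X p.1) (B.X p.2.1) (D.X p.2.2)).inv

/-- The left unitor of `𝒞_⊕`, with components the left unitors of `𝒞`. -/
def DSObj.leftUnitorHom (A : DSObj C) : PreHom ((DSObj.unit C).tensor A) A where
  α := fun P => P.image Prod.snd
  hα := fun P Q => Finset.image_union P Q
  f := fun p q hq => by
    have h := mem_image_singleton hq
    subst h
    exact (λ_ (A.X p.2)).hom

/-- The inverse left unitor of `𝒞_⊕`. -/
def DSObj.leftUnitorInvHom (A : DSObj C) : PreHom A ((DSObj.unit C).tensor A) where
  α := fun P => P.image (fun s => (PUnit.unit, s))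
  hα := fun P Q => Finset.image_union P Q
  f := fun s q hq => by
    have h := mem_image_singleton hq
    subst h
    exact (λ_ (A.X s)).inv

/-- The right unitor of `𝒞_⊕`, with components the right unitors of `𝒞`. -/
def DSObj.rightUnitorHom (A : DSObj C) : PreHom (A.tensor (DSObj.unit C)) A where
  α := fun P => P.image Prod.fst
  hα := fun P Q => Finset.image_union P Q
  f := fun p q hq => by
    have h := mem_image_singleton hq
    subst h
    exact (ρ_ (A.X p.1)).hom

/-- The inverse right unitor of `𝒞_⊕`. -/
def DSObj.rightUnitorInvHom (A : DSObj C) : PreHom A (A.tensor (DSObj.unit C)) where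
  α := fun P => P.image (fun s => (s, PUnit.unit))
  hα := fun P Q => Finset.image_union P Q
  f := fun s q hq => by
    have h := mem_image_singleton hq
    subst h
    exact (ρ_ (A.X s)).inv

end

noncomputable section AuxHelpers
set_option linter.unusedSectionVars false
open MonoidalCategory

variable {C : Type u} [Category.{v} C] [Preadditive C] [MonoidalCategory C]

lemma PreHom.equiv_of_eq {A B : DSObj C} {F G : PreHom A B}
    (hα : ∀ s, F.α {s} = G.α {s})
    (hf : ∀ s t (h1 : t ∈ F.α {s}) (h2 : t ∈ G.α {s}), F.f s t h1 = G.f s t h2) :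
    F.equiv G := by
  intro s t
  refine ⟨fun h1 h2 => hf s t h1 h2, fun h1 h2 => absurd (hα s ▸ h1) h2,
    fun h2 h1 => absurd (by rw [hα s]; exact h2) h1⟩

lemma comp_f_eq {A B D : DSObj C} {F : PreHom A B} {G : PreHom B D}
    {s : A.ι} {q : D.ι} (h : q ∈ (F.comp G).α {s}) (t : B.ι)
    (ht : t ∈ F.α {s}) (htq : q ∈ G.α {t})
    (huniq : ∀ u ∈ F.α {s}, q ∈ G.α {u} → u = t) :
    (F.comp G).f s q h = F.f s t ht ≫ G.f t q htq := by
  show (∑ u ∈ (F.α {s}).attach,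
      if h : q ∈ G.α {u.1} then F.f s u.1 u.2 ≫ G.f u.1 q h else 0) = _
  rw [Finset.sum_eq_single_of_mem ⟨t, ht⟩ (Finset.mem_attach _ _)]
  · rw [dif_pos htq]
  · intro u _ hu
    rw [dif_neg]
    intro hq
    exact hu (Subtype.ext (huniq u.1 u.2 hq))

lemma tensor_f {A A' B B' : DSObj C} (F : PreHom A B) (G : PreHom A' B')
    (p : (A.tensor A').ι) (q : (B.tensor B').ι) (hq : q ∈ (F.tensor G).α {p})
    (h1 : q.1 ∈ F.α {p.1}) (h2 : q.2 ∈ G.α {p.2}) :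
    (F.tensor G).f p q hq = F.f p.1 q.1 h1 ⊗ₘ G.f p.2 q.2 h2 := rfl

lemma id_f {A : DSObj C} (s : A.ι) (h : s ∈ (PreHom.id A).α {s}) :
    (PreHom.id A).f s s h = 𝟙 (A.X s) := rfl

lemma assocHom_f (A B D : DSObj C) (p : ((A.tensor B).tensor D).ι)
    (hq : (p.1.1, (p.1.2, p.2)) ∈ (DSObj.assocHom A B D).α {p}) :
    (DSObj.assocHom A B D).f p (p.1.1, (p.1.2, p.2)) hq =
      (α_ (A.X p.1.1) (B.X p.1.2) (D.X p.2)).hom := rfl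

lemma assocInvHom_f (A B D : DSObj C) (p : (A.tensor (B.tensor D)).ι)
    (hq : ((p.1, p.2.1), p.2.2) ∈ (DSObj.assocInvHom A B D).α {p}) :
    (DSObj.assocInvHom A B D).f p ((p.1, p.2.1), p.2.2) hq =
      (α_ (A.X p.1) (B.X p.2.1) (D.X p.2.2)).inv := rfl

lemma leftUnitorHom_f (A : DSObj C) (p : ((DSObj.unit C).tensor A).ι)
    (hq : p.2 ∈ (DSObj.leftUnitorHom A).α {p}) :
    (DSObj.leftUnitorHom A).f p p.2 hq = (λ_ (A.X p.2)).hom := rfl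

lemma leftUnitorInvHom_f (A : DSObj C) (s : A.ι)
    (hq : (PUnit.unit, s) ∈ (DSObj.leftUnitorInvHom A).α {s}) :
    (DSObj.leftUnitorInvHom A).f s (PUnit.unit, s) hq = (λ_ (A.X s)).inv := rfl

lemma rightUnitorHom_f (A : DSObj C) (p : (A.tensor (DSObj.unit C)).ι)
    (hq : p.1 ∈ (DSObj.rightUnitorHom A).α {p}) :
    (DSObj.rightUnitorHom A).f p p.1 hq = (ρ_ (A.X p.1)).hom := rfl

lemma rightUnitorInvHom_f (A : DSObj C) (s : A.ι)
    (hq : (s, PUnit.unit) ∈ (DSObj.rightUnitorInvHom A).α {s}) :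
    (DSObj.rightUnitorInvHom A).f s (s, PUnit.unit) hq = (ρ_ (A.X s)).inv := rfl

lemma mem_prod {α β : Type} {s : Finset α} {t : Finset β} {a : α} {b : β}
    (ha : a ∈ s) (hb : b ∈ t) : (a, b) ∈ s ×ˢ t := Finset.mem_product.mpr ⟨ha, hb⟩

lemma comp_α {A B D : DSObj C} (F : PreHom A B) (G : PreHom B D) (P : Finset A.ι) :
    (F.comp G).α P = G.α (F.α P) := rfl

lemma id_αP (A : DSObj C) (P : Finset A.ι) : (PreHom.id A).α P = P := rfl

lemma tensor_α {A A' B B' : DSObj C} (F : PreHom A B) (G : PreHom A' B')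
    (p : (A.tensor A').ι) :
    (F.tensor G).α {p} = F.α {p.1} ×ˢ G.α {p.2} := Finset.singleton_biUnion

lemma assocHom_αP (A B D : DSObj C) (P) : (DSObj.assocHom A B D).α P =
    P.image (β := (A.tensor (B.tensor D)).ι) (fun p => (p.1.1, (p.1.2, p.2))) := by
  ext x; simp [DSObj.assocHom]

lemma assocInvHom_αP (A B D : DSObj C) (P) : (DSObj.assocInvHom A B D).α P =
    P.image (β := ((A.tensor B).tensor D).ι) (fun p => ((p.1, p.2.1), p.2.2)) := by
  ext x; simp [DSObj.assocInvHom]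

lemma leftUnitorHom_αP (A : DSObj C) (P) :
    (DSObj.leftUnitorHom A).α P = P.image Prod.snd := by
  ext x; simp [DSObj.leftUnitorHom]

lemma leftUnitorInvHom_αP (A : DSObj C) (P) :
    (DSObj.leftUnitorInvHom A).α P = P.image (β := ((DSObj.unit C).tensor A).ι) (fun s => (PUnit.unit, s)) := by
  ext x; simp [DSObj.leftUnitorInvHom]

lemma rightUnitorHom_αP (A : DSObj C) (P) :
    (DSObj.rightUnitorHom A).α P = P.image Prod.fst := by
  ext x; simp [DSObj.rightUnitorHom]

lemma rightUnitorInvHom_αP (A : DSObj C) (P) :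
    (DSObj.rightUnitorInvHom A).α P = P.image (β := (A.tensor (DSObj.unit C)).ι) (fun s => (s, PUnit.unit)) := by
  ext x; simp [DSObj.rightUnitorInvHom]

lemma tensor_α_single {A A' B B' : DSObj C} (F : PreHom A B) (G : PreHom A' B')
    (p : (A.tensor A').ι) (t : B.ι) (u : B'.ι)
    (hF : F.α {p.1} = {t}) (hG : G.α {p.2} = {u}) :
    (F.tensor G).α {p} = {(t, u)} := by
  rw [tensor_α, hF, hG]; exact Finset.singleton_product_singleton

lemma comp_f_single {A B D : DSObj C} {F : PreHom A B} {G : PreHom B D}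
    {s : A.ι} {t : B.ι} {q : D.ι} (hF : F.α {s} = {t}) (htq : q ∈ G.α {t})
    (h : q ∈ (F.comp G).α {s}) :
    (F.comp G).f s q h =
      F.f s t (by rw [hF]; exact Finset.mem_singleton_self t) ≫ G.f t q htq :=
  comp_f_eq h t _ htq (fun u hu _ => by rw [hF] at hu; exact Finset.mem_singleton.mp hu)

end AuxHelpers

/-- `𝒞_⊕` with the tensor product `⊗_{𝒞_⊕}`, unit `𝓘(𝟙)` with
componentwise unitors, and componentwise associators, is a monoidal category:
the associators and unitors are natural isomorphisms and the pentagon and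
triangle axioms hold. -/
theorem dsum_is_monoidal {C : Type u} [Category.{v} C] [Preadditive C]
    [MonoidalCategory C] {𝔽 : Type*} [Field 𝔽] [CategoryTheory.Linear 𝔽 C] :
    -- the associators are natural ...
    (∀ {A A' B B' D D' : DSObj C} (F : PreHom A A') (G : PreHom B B') (H : PreHom D D'),
      (((F.tensor G).tensor H).comp (DSObj.assocHom A' B' D')).equiv
        ((DSObj.assocHom A B D).comp (F.tensor (G.tensor H)))) ∧
    -- ... isomorphisms
    (∀ A B D : DSObj C,
      (((DSObj.assocHom A B D).comp (DSObj.assocInvHom A B D)).equiv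
        (PreHom.id ((A.tensor B).tensor D))) ∧
      (((DSObj.assocInvHom A B D).comp (DSObj.assocHom A B D)).equiv
        (PreHom.id (A.tensor (B.tensor D))))) ∧
    -- the left unitors are natural isomorphisms
    (∀ {A B : DSObj C} (F : PreHom A B),
      (((PreHom.id (DSObj.unit C)).tensor F).comp (DSObj.leftUnitorHom B)).equiv
        ((DSObj.leftUnitorHom A).comp F)) ∧
    (∀ A : DSObj C,
      (((DSObj.leftUnitorHom A).comp (DSObj.leftUnitorInvHom A)).equiv
        (PreHom.id ((DSObj.unit C).tensor A))) ∧
      (((DSObj.leftUnitorInvHom A).comp (DSObj.leftUnitorHom A)).equiv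
        (PreHom.id A))) ∧
    -- the right unitors are natural isomorphisms
    (∀ {A B : DSObj C} (F : PreHom A B),
      ((F.tensor (PreHom.id (DSObj.unit C))).comp (DSObj.rightUnitorHom B)).equiv
        ((DSObj.rightUnitorHom A).comp F)) ∧
    (∀ A : DSObj C,
      (((DSObj.rightUnitorHom A).comp (DSObj.rightUnitorInvHom A)).equiv
        (PreHom.id (A.tensor (DSObj.unit C)))) ∧
      (((DSObj.rightUnitorInvHom A).comp (DSObj.rightUnitorHom A)).equiv
        (PreHom.id A))) ∧
    -- the pentagon axiom
    (∀ A B D E : DSObj C,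
      ((((DSObj.assocHom A B D).tensor (PreHom.id E)).comp
          ((DSObj.assocHom A (B.tensor D) E).comp
            ((PreHom.id A).tensor (DSObj.assocHom B D E)))).equiv
        ((DSObj.assocHom (A.tensor B) D E).comp
          (DSObj.assocHom A B (D.tensor E))))) ∧
    -- the triangle axiom
    (∀ A B : DSObj C,
      (((DSObj.assocHom A (DSObj.unit C) B).comp
          ((PreHom.id A).tensor (DSObj.leftUnitorHom B))).equiv
        ((DSObj.rightUnitorHom A).tensor (PreHom.id B)))) := by
  refine ⟨?_, ?_, ?_, ?_, ?_, ?_, ?_, ?_⟩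
  · -- associator naturality
    intro A A' B B' D D' F G H
    apply PreHom.equiv_of_eq
    · rintro ⟨⟨x, y⟩, z⟩
      erw [comp_α, comp_α, assocHom_αP, assocHom_αP, Finset.image_singleton]
      erw [tensor_α, tensor_α, tensor_α, tensor_α]
      ext ⟨a, b, c⟩
      constructor
      · intro hq
        obtain ⟨u, hu, huq⟩ := Finset.mem_image.mp hq
        obtain ⟨hu', hc⟩ := Finset.mem_product.mp hu
        obtain ⟨ha, hb⟩ := Finset.mem_product.mp hu'
        obtain ⟨rfl, rfl, rfl⟩ : u.1.1 = a ∧ u.1.2 = b ∧ u.2 = c := by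
          exact ⟨congrArg (fun r : A'.ι × (B'.ι × D'.ι) => r.1) huq,
            congrArg (fun r : A'.ι × (B'.ι × D'.ι) => r.2.1) huq,
            congrArg (fun r : A'.ι × (B'.ι × D'.ι) => r.2.2) huq⟩
        exact mem_prod ha (mem_prod hb hc)
      · intro hq
        obtain ⟨ha, hbc⟩ := Finset.mem_product.mp hq
        obtain ⟨hb, hc⟩ := Finset.mem_product.mp hbc
        exact Finset.mem_image.mpr ⟨((a, b), c), mem_prod (mem_prod ha hb) hc, rfl⟩
    · intro p q h1 h2
      rcases p with ⟨⟨x, y⟩, z⟩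
      rcases q with ⟨a, b, c⟩
      have h2' := h2
      erw [comp_α, assocHom_αP, Finset.image_singleton, tensor_α, tensor_α] at h2'
      obtain ⟨ha, hbc⟩ := Finset.mem_product.mp h2'
      obtain ⟨hb, hc⟩ := Finset.mem_product.mp hbc
      have ht : ((a, b), c) ∈ ((F.tensor G).tensor H).α {((x, y), z)} := by
        erw [tensor_α, tensor_α]; exact mem_prod (mem_prod ha hb) hc
      erw [comp_f_eq h1 ((a, b), c) ht
          (Finset.mem_image_of_mem _ (Finset.mem_singleton_self _))
          (by rintro ⟨⟨a', b'⟩, c'⟩ hu hq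
              have h := mem_image_singleton hq
              obtain ⟨rfl, rfl, rfl⟩ : a' = a ∧ b' = b ∧ c' = c :=
                ⟨congrArg (fun r => r.1) h, congrArg (fun r => r.2.1) h,
                 congrArg (fun r => r.2.2) h⟩
              rfl),
        comp_f_eq h2 (x, (y, z))
          (Finset.mem_image_of_mem _ (Finset.mem_singleton_self _))
          (by erw [tensor_α, tensor_α]; exact mem_prod ha (mem_prod hb hc))
          (fun u hu _ => (mem_image_singleton hu).symm),
        tensor_f (F.tensor G) H ((x, y), z) ((a, b), c) ht
          (by erw [tensor_α]; exact mem_prod ha hb) hc,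
        tensor_f F G (x, y) (a, b) (by erw [tensor_α]; exact mem_prod ha hb) ha hb,
        tensor_f F (G.tensor H) (x, (y, z)) (a, (b, c))
          (by erw [tensor_α, tensor_α]; exact mem_prod ha (mem_prod hb hc)) ha
          (by erw [tensor_α]; exact mem_prod hb hc),
        tensor_f G H (y, z) (b, c) (by erw [tensor_α]; exact mem_prod hb hc) hb hc,
        assocHom_f A' B' D' ((a, b), c), assocHom_f A B D ((x, y), z)]
      exact MonoidalCategory.associator_naturality _ _ _
  · -- associator is iso
    intro A B D
    constructor
    · apply PreHom.equiv_of_eq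
      · rintro ⟨⟨a, b⟩, c⟩
        erw [comp_α, assocHom_αP, Finset.image_singleton, assocInvHom_αP,
          Finset.image_singleton]
      · intro p q h1 h2
        rcases p with ⟨⟨a, b⟩, c⟩
        obtain rfl := Finset.mem_singleton.mp h2
        erw [comp_f_single (by erw [assocHom_αP, Finset.image_singleton]; rfl)
            (Finset.mem_image_of_mem _ (Finset.mem_singleton_self _)) h1,
          assocHom_f A B D ((a, b), c), assocInvHom_f A B D (a, (b, c)), id_f]
        exact Iso.hom_inv_id _
    · apply PreHom.equiv_of_eq
      · rintro ⟨a, b, c⟩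
        erw [comp_α, assocInvHom_αP, Finset.image_singleton, assocHom_αP,
          Finset.image_singleton]
      · intro p q h1 h2
        rcases p with ⟨a, b, c⟩
        obtain rfl := Finset.mem_singleton.mp h2
        erw [comp_f_single (by erw [assocInvHom_αP, Finset.image_singleton]; rfl)
            (Finset.mem_image_of_mem _ (Finset.mem_singleton_self _)) h1,
          assocInvHom_f A B D (a, (b, c)), assocHom_f A B D ((a, b), c), id_f]
        exact Iso.inv_hom_id _
  · -- left unitor naturality
    intro A B F
    apply PreHom.equiv_of_eq
    · rintro ⟨⟨⟩, s⟩
      erw [comp_α, comp_α, leftUnitorHom_αP, leftUnitorHom_αP, Finset.image_singleton,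
        tensor_α, id_αP]
      ext q
      constructor
      · intro hq
        obtain ⟨u, hu, rfl⟩ := Finset.mem_image.mp hq
        exact (Finset.mem_product.mp hu).2
      · intro hq
        exact Finset.mem_image_of_mem _ (mem_prod (Finset.mem_singleton_self _) hq)
    · intro p q h1 h2
      rcases p with ⟨⟨⟩, s⟩
      have h2' := h2
      erw [comp_α, leftUnitorHom_αP, Finset.image_singleton] at h2'
      erw [comp_f_eq h1 (PUnit.unit, q)
          (by erw [tensor_α]; exact mem_prod (Finset.mem_singleton_self _) h2')
          (Finset.mem_image_of_mem _ (Finset.mem_singleton_self _))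
          (by rintro ⟨⟨⟩, b'⟩ hu hq
              exact congrArg (fun r => (PUnit.unit, r)) (mem_image_singleton hq)),
        comp_f_eq h2 s
          (Finset.mem_image_of_mem _ (Finset.mem_singleton_self _)) h2'
          (fun u hu _ => (mem_image_singleton hu).symm),
        tensor_f (PreHom.id (DSObj.unit C)) F (PUnit.unit, s) (PUnit.unit, q)
          (by erw [tensor_α]; exact mem_prod (Finset.mem_singleton_self _) h2')
          (Finset.mem_singleton_self _) h2',
        id_f, leftUnitorHom_f B (PUnit.unit, q), leftUnitorHom_f A (PUnit.unit, s)]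
      erw [MonoidalCategory.id_tensorHom]
      exact MonoidalCategory.leftUnitor_naturality _
  · -- left unitor is iso
    intro A
    constructor
    · apply PreHom.equiv_of_eq
      · rintro ⟨⟨⟩, s⟩
        erw [comp_α, leftUnitorHom_αP, Finset.image_singleton, leftUnitorInvHom_αP,
          Finset.image_singleton]
      · intro p q h1 h2
        rcases p with ⟨⟨⟩, s⟩
        obtain rfl := Finset.mem_singleton.mp h2
        erw [comp_f_single (by erw [leftUnitorHom_αP, Finset.image_singleton])
            (Finset.mem_image_of_mem _ (Finset.mem_singleton_self _)) h1,
          leftUnitorHom_f A (PUnit.unit, s), leftUnitorInvHom_f A s, id_f]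
        exact Iso.hom_inv_id _
    · apply PreHom.equiv_of_eq
      · intro s
        erw [comp_α, leftUnitorInvHom_αP, Finset.image_singleton, leftUnitorHom_αP,
          Finset.image_singleton]
      · intro s q h1 h2
        obtain rfl := Finset.mem_singleton.mp h2
        erw [comp_f_single (by erw [leftUnitorInvHom_αP, Finset.image_singleton]; rfl)
            (Finset.mem_image_of_mem _ (Finset.mem_singleton_self _)) h1,
          leftUnitorInvHom_f A q, leftUnitorHom_f A (PUnit.unit, q), id_f]
        exact Iso.inv_hom_id _
  · -- right unitor naturality
    intro A B F
    apply PreHom.equiv_of_eq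
    · rintro ⟨s, ⟨⟩⟩
      erw [comp_α, comp_α, rightUnitorHom_αP, rightUnitorHom_αP, Finset.image_singleton,
        tensor_α, id_αP]
      ext q
      constructor
      · intro hq
        obtain ⟨u, hu, rfl⟩ := Finset.mem_image.mp hq
        exact (Finset.mem_product.mp hu).1
      · intro hq
        exact Finset.mem_image_of_mem _ (mem_prod hq (Finset.mem_singleton_self _))
    · intro p q h1 h2
      rcases p with ⟨s, ⟨⟩⟩
      have h2' := h2
      erw [comp_α, rightUnitorHom_αP, Finset.image_singleton] at h2'
      erw [comp_f_eq h1 (q, PUnit.unit)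
          (by erw [tensor_α]; exact mem_prod h2' (Finset.mem_singleton_self _))
          (Finset.mem_image_of_mem _ (Finset.mem_singleton_self _))
          (by rintro ⟨a', ⟨⟩⟩ hu hq
              exact congrArg (fun r => (r, PUnit.unit)) (mem_image_singleton hq)),
        comp_f_eq h2 s
          (Finset.mem_image_of_mem _ (Finset.mem_singleton_self _)) h2'
          (fun u hu _ => (mem_image_singleton hu).symm),
        tensor_f F (PreHom.id (DSObj.unit C)) (s, PUnit.unit) (q, PUnit.unit)
          (by erw [tensor_α]; exact mem_prod h2' (Finset.mem_singleton_self _))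
          h2' (Finset.mem_singleton_self _),
        id_f, rightUnitorHom_f B (q, PUnit.unit), rightUnitorHom_f A (s, PUnit.unit)]
      erw [MonoidalCategory.tensorHom_id]
      exact MonoidalCategory.rightUnitor_naturality _
  · -- right unitor is iso
    intro A
    constructor
    · apply PreHom.equiv_of_eq
      · rintro ⟨s, ⟨⟩⟩
        erw [comp_α, rightUnitorHom_αP, Finset.image_singleton, rightUnitorInvHom_αP,
          Finset.image_singleton]
      · intro p q h1 h2
        rcases p with ⟨s, ⟨⟩⟩
        obtain rfl := Finset.mem_singleton.mp h2
        erw [comp_f_single (by erw [rightUnitorHom_αP, Finset.image_singleton])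
            (Finset.mem_image_of_mem _ (Finset.mem_singleton_self _)) h1,
          rightUnitorHom_f A (s, PUnit.unit), rightUnitorInvHom_f A s, id_f]
        exact Iso.hom_inv_id _
    · apply PreHom.equiv_of_eq
      · intro s
        erw [comp_α, rightUnitorInvHom_αP, Finset.image_singleton, rightUnitorHom_αP,
          Finset.image_singleton]
      · intro s q h1 h2
        obtain rfl := Finset.mem_singleton.mp h2
        erw [comp_f_single (by erw [rightUnitorInvHom_αP, Finset.image_singleton]; rfl)
            (Finset.mem_image_of_mem _ (Finset.mem_singleton_self _)) h1,
          rightUnitorInvHom_f A q, rightUnitorHom_f A (q, PUnit.unit), id_f]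
        exact Iso.inv_hom_id _
  · -- pentagon
    intro A B D E
    apply PreHom.equiv_of_eq
    · rintro ⟨⟨⟨a, b⟩, d⟩, e⟩
      exact rfl
    · intro p q h1 h2
      rcases p with ⟨⟨⟨a, b⟩, d⟩, e⟩
      have h2' := h2
      simp only [comp_α, assocHom_αP, Finset.image_singleton] at h2'
      obtain rfl := Finset.mem_singleton.mp h2'
      have hT1 : ((DSObj.assocHom A B D).tensor (PreHom.id E)).α {(((a, b), d), e)} =
          {((a, (b, d)), e)} :=
        tensor_α_single (DSObj.assocHom A B D) (PreHom.id E) (((a, b), d), e)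
          (a, (b, d)) e (by erw [assocHom_αP, Finset.image_singleton]) rfl
      have hT3 : (a, (b, (d, e))) ∈
          ((PreHom.id A).tensor (DSObj.assocHom B D E)).α {(a, ((b, d), e))} := by
        erw [tensor_α]
        exact mem_prod (Finset.mem_singleton_self _)
          (Finset.mem_image_of_mem _ (Finset.mem_singleton_self _))
      erw [comp_f_single hT1
          (by erw [comp_α, assocHom_αP, Finset.image_singleton]; exact hT3) h1,
        comp_f_single (by erw [assocHom_αP, Finset.image_singleton]; rfl) hT3 _,
        comp_f_single (by erw [assocHom_αP, Finset.image_singleton])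
          (Finset.mem_image_of_mem _ (Finset.mem_singleton_self _)) h2,
        tensor_f (DSObj.assocHom A B D) (PreHom.id E) (((a, b), d), e) ((a, (b, d)), e)
          _ (Finset.mem_image_of_mem _ (Finset.mem_singleton_self _))
          (Finset.mem_singleton_self _),
        tensor_f (PreHom.id A) (DSObj.assocHom B D E) (a, ((b, d), e)) (a, (b, (d, e)))
          hT3 (Finset.mem_singleton_self _)
          (Finset.mem_image_of_mem _ (Finset.mem_singleton_self _)),
        id_f, id_f, assocHom_f A B D ((a, b), d), assocHom_f B D E ((b, d), e),
        assocHom_f A (B.tensor D) E ((a, (b, d)), e),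
        assocHom_f (A.tensor B) D E (((a, b), d), e),
        assocHom_f A B (D.tensor E) ((a, b), (d, e))]
      erw [MonoidalCategory.tensorHom_id, MonoidalCategory.id_tensorHom]
      exact MonoidalCategory.pentagon _ _ _ _
  · -- triangle
    intro A B
    apply PreHom.equiv_of_eq
    · rintro ⟨⟨a, ⟨⟩⟩, b⟩
      erw [comp_α, assocHom_αP A (DSObj.unit C) B, Finset.image_singleton,
        tensor_α_single (PreHom.id A) (DSObj.leftUnitorHom B) (a, (PUnit.unit, b)) a b
          rfl (by erw [leftUnitorHom_αP, Finset.image_singleton])]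
    · intro p q h1 h2
      rcases p with ⟨⟨a, ⟨⟩⟩, b⟩
      have h2' := h2
      erw [tensor_α, rightUnitorHom_αP, Finset.image_singleton, id_αP] at h2'
      obtain ⟨hq1, hq2⟩ := Finset.mem_product.mp h2'
      obtain rfl : q = (a, b) := by
        rcases q with ⟨qa, qb⟩
        obtain rfl := Finset.mem_singleton.mp hq1
        obtain rfl := Finset.mem_singleton.mp hq2
        rfl
      erw [comp_f_single (by erw [assocHom_αP, Finset.image_singleton]; rfl)
          (by erw [tensor_α]
              exact mem_prod (Finset.mem_singleton_self _)
                (Finset.mem_image_of_mem _ (Finset.mem_singleton_self _))) h1,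
        assocHom_f A (DSObj.unit C) B ((a, PUnit.unit), b),
        tensor_f (PreHom.id A) (DSObj.leftUnitorHom B) (a, (PUnit.unit, b)) (a, b)
          _ (Finset.mem_singleton_self _)
          (Finset.mem_image_of_mem _ (Finset.mem_singleton_self _)),
        id_f, leftUnitorHom_f B (PUnit.unit, b),
        tensor_f (DSObj.rightUnitorHom A) (PreHom.id B) ((a, PUnit.unit), b) (a, b)
          h2 (Finset.mem_image_of_mem _ (Finset.mem_singleton_self _))
          (Finset.mem_singleton_self _),
        rightUnitorHom_f A (a, PUnit.unit), id_f]
      erw [MonoidalCategory.id_tensorHom, MonoidalCategory.tensorHom_id]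
      exact MonoidalCategory.triangle _ _
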